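/- For every λ ≥ 0 and integer k ≥ 1, the total progeny T of a Galton–Watson process with Poisson(λ) offspring satisfies P(T = k) = e^{−λk}(λk)^{k−1}/k! ≤ e/(√(2π) k^{3/2}). -/

import Mathlib

open scoped Classical BigOperators ENNReal
open MeasureTheory ProbabilityTheory
noncomputable section

/-- Generation sizes of a Galton–Watson branching process started from a single
individual, where `ξ n i` is the number of children of the `i`-th individual of
generation `n`. -/
def gwGen {Ω : Type*} (ξ : ℕ → ℕ → Ω → ℕ) : ℕ → Ω → ℕ
  | 0, _ => 1
  | n + 1, ω => ∑ i ∈ Finset.range (gwGen ξ n ω), ξ n i ω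

/-- Total progeny (possibly infinite) of the Galton–Watson process with offspring
variables `ξ`. -/
def gwTotal {Ω : Type*} (ξ : ℕ → ℕ → Ω → ℕ) (ω : Ω) : ℕ∞ :=
  ∑' n, (gwGen ξ n ω : ℕ∞)

/-- `ξ` is a family of i.i.d. offspring variables with distribution given by the
pmf `μ : ℕ → ℝ≥0∞` on the probability space `(Ω, P)`. -/
def IsGW {Ω : Type*} [MeasurableSpace Ω] (P : Measure Ω) (ξ : ℕ → ℕ → Ω → ℕ)
    (μ : ℕ → ℝ≥0∞) : Prop :=
  (∀ n i, Measurable (ξ n i)) ∧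
  (∀ n i m, P {ω | ξ n i ω = m} = μ m) ∧
  iIndepFun (m := fun _ : ℕ × ℕ => (inferInstance : MeasurableSpace ℕ))
    (fun q : ℕ × ℕ => ξ q.1 q.2) P

/-- The `Binomial(n,p)` pmf on `ℕ`. -/
def binomialPMF (n : ℕ) (p : ℝ) (m : ℕ) : ℝ≥0∞ :=
  ENNReal.ofReal ((n.choose m : ℝ) * p ^ m * (1 - p) ^ (n - m))

/-- The `Poisson(λ)` pmf on `ℕ`. -/
def poissonPMF' (lam : ℝ) (m : ℕ) : ℝ≥0∞ :=
  ENNReal.ofReal (Real.exp (-lam) * lam ^ m / m.factorial)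


namespace GWAux

/-- Poisson pmf as a real number. -/
def pois (a : ℝ) (r : ℕ) : ℝ := Real.exp (-a) * a ^ r / r.factorial

lemma pois_nonneg {a : ℝ} (ha : 0 ≤ a) (r : ℕ) : 0 ≤ pois a r := by
  unfold pois; positivity

lemma pois_zero (r : ℕ) : pois 0 r = if r = 0 then 1 else 0 := by
  cases r with
  | zero => simp [pois]
  | succ n => simp [pois]

lemma pois_conv (a b : ℝ) (r : ℕ) :
    ∑ i ∈ Finset.range (r + 1), pois a i * pois b (r - i) = pois (a + b) r := by
  have h1 : ∀ i ∈ Finset.range (r + 1),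
      pois a i * pois b (r - i)
        = Real.exp (-(a + b)) * ((r.choose i : ℝ) * (a ^ i * b ^ (r - i))) / r.factorial := by
    intro i hi
    have hir : i ≤ r := Nat.lt_succ_iff.mp (Finset.mem_range.mp hi)
    have hfac : ((r.choose i : ℝ) * i.factorial * (r - i).factorial) = (r.factorial : ℝ) := by
      rw_mod_cast [Nat.choose_mul_factorial_mul_factorial hir]
    have hi0 : (i.factorial : ℝ) ≠ 0 := Nat.cast_ne_zero.mpr i.factorial_ne_zero
    have hri0 : ((r - i).factorial : ℝ) ≠ 0 := Nat.cast_ne_zero.mpr (r - i).factorial_ne_zero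
    have hr0 : (r.factorial : ℝ) ≠ 0 := Nat.cast_ne_zero.mpr r.factorial_ne_zero
    unfold pois
    rw [Real.exp_neg, Real.exp_neg, Real.exp_neg, Real.exp_add]
    field_simp
    rw [← hfac]
    ring
  rw [Finset.sum_congr rfl h1]
  unfold pois
  rw [add_pow, Finset.mul_sum, Finset.sum_div]
  refine Finset.sum_congr rfl fun i _ => ?_
  ring

lemma sum_i_choose (x y : ℝ) (r : ℕ) :
    ∑ i ∈ Finset.range (r + 1), (i : ℝ) * r.choose i * x ^ i * y ^ (r - i)
      = r * x * (x + y) ^ (r - 1) := by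
  cases r with
  | zero => simp
  | succ s =>
    rw [Finset.sum_range_succ']
    simp only [Nat.cast_zero, zero_mul, zero_pow, add_zero, Nat.cast_succ, mul_zero]
    have key : ∀ i : ℕ, ((i : ℝ) + 1) * ((s + 1).choose (i + 1)) = (s + 1) * s.choose i := by
      intro i
      have := Nat.add_one_mul_choose_eq s i
      have h2 : ((s.succ * s.choose i : ℕ) : ℝ) = (((s + 1).choose (i + 1) * (i + 1) : ℕ) : ℝ) := by
        rw [this]
      push_cast at h2
      push_cast
      linarith [h2]
    have h3 : ∀ i ∈ Finset.range (s + 1),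
        ((i : ℝ) + 1) * ((s + 1).choose (i + 1)) * x ^ (i + 1) * y ^ (s + 1 - (i + 1))
          = ((s : ℝ) + 1) * x * (s.choose i * x ^ i * y ^ (s - i)) := by
      intro i hi
      rw [key i]
      have : s + 1 - (i + 1) = s - i := by omega
      rw [this]
      ring
    rw [Finset.sum_congr rfl h3, ← Finset.mul_sum]
    have h4 : ∑ i ∈ Finset.range (s + 1), (s.choose i : ℝ) * x ^ i * y ^ (s - i)
        = (x + y) ^ s := by
      rw [add_pow]
      refine Finset.sum_congr rfl fun i _ => ?_
      ring
    rw [h4]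
    simp

/-- Closed-form probability that a Poisson GW forest with `j` roots has total progeny `m`. -/
def A (lam : ℝ) (j m : ℕ) : ℝ :=
  if j = 0 then (if m = 0 then 1 else 0)
  else if j ≤ m then
    Real.exp (-(lam * m)) * lam ^ (m - j) * j * (m : ℝ) ^ (m - j) / (m * (m - j).factorial)
  else 0

lemma A_nonneg {lam : ℝ} (hlam : 0 ≤ lam) (j m : ℕ) : 0 ≤ A lam j m := by
  unfold A
  split_ifs <;> positivity

lemma A_eq_zero_of_lt {lam : ℝ} {j m : ℕ} (h : m < j) : A lam j m = 0 := by
  unfold A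
  have hj : j ≠ 0 := by omega
  have : ¬ j ≤ m := by omega
  simp [hj, this]

/-- Real-valued recursion for `A`. -/
lemma A_rec (lam : ℝ) {j m : ℕ} (hj : 1 ≤ j) (hjm : j ≤ m) :
    A lam j m = ∑ i ∈ Finset.range (m - j + 1), pois ((j : ℝ) * lam) i * A lam i (m - j) := by
  rcases eq_or_lt_of_le hjm with rfl | hlt
  · simp only [Nat.sub_self, zero_add, Finset.sum_range_one]
    unfold pois A
    have hj0 : j ≠ 0 := by omega
    simp only [hj0, if_false, le_refl, if_true, if_pos rfl, pow_zero, Nat.sub_self,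
      Nat.factorial_zero]
    have hjR : (j : ℝ) ≠ 0 := Nat.cast_ne_zero.mpr hj0
    field_simp
  · set r := m - j with hr
    have hr1 : 1 ≤ r := by omega
    have hm : m = j + r := by omega
    have hm0 : m ≠ 0 := by omega
    have hterm : ∀ i ∈ Finset.range (r + 1),
        pois ((j : ℝ) * lam) i * A lam i r
          = (Real.exp (-(lam * m)) * lam ^ r / ((r : ℝ) * r.factorial))
            * ((i : ℝ) * r.choose i * (j : ℝ) ^ i * (r : ℝ) ^ (r - i)) := by
      intro i hi
      have hir : i ≤ r := Nat.lt_succ_iff.mp (Finset.mem_range.mp hi)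
      rcases Nat.eq_zero_or_pos i with rfl | hi1
      · simp only [Nat.cast_zero, zero_mul, mul_zero, zero_mul]
        unfold A
        have : r ≠ 0 := by omega
        simp [this, pois]
      · unfold pois A
        have hi0 : i ≠ 0 := by omega
        simp only [hi0, if_false, hir, if_true]
        have hfac : ((r.choose i : ℝ) * i.factorial * (r - i).factorial) = (r.factorial : ℝ) := by
          rw_mod_cast [Nat.choose_mul_factorial_mul_factorial hir]
        have hi0' : (i.factorial : ℝ) ≠ 0 := Nat.cast_ne_zero.mpr i.factorial_ne_zero
        have hri0 : ((r - i).factorial : ℝ) ≠ 0 := Nat.cast_ne_zero.mpr (r - i).factorial_ne_zero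
        have hrf0 : (r.factorial : ℝ) ≠ 0 := Nat.cast_ne_zero.mpr r.factorial_ne_zero
        have hrR : (r : ℝ) ≠ 0 := by exact_mod_cast (by omega : r ≠ 0)
        have hexp : Real.exp (-((j:ℝ) * lam)) * Real.exp (-(lam * r)) = Real.exp (-(lam * m)) := by
          rw [← Real.exp_add]
          congr 1
          have : (m : ℝ) = (j : ℝ) + (r : ℝ) := by exact_mod_cast congrArg (Nat.cast : ℕ → ℝ) hm
          rw [this]
          ring
        have hlam : lam ^ (r - i) * lam ^ i = lam ^ r := by
          rw [← pow_add]
          congr 1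
          omega
        have hch : (r.choose i : ℝ) ≠ 0 := Nat.cast_ne_zero.mpr (Nat.choose_pos hir).ne'
        rw [← hexp, ← hlam, ← hfac, mul_pow]
        field_simp
    rw [Finset.sum_congr rfl hterm, ← Finset.mul_sum, sum_i_choose]
    have hcast : (j : ℝ) + (r : ℝ) = (m : ℝ) := by exact_mod_cast (by omega : j + r = m)
    have hmR : (m : ℝ) ≠ 0 := Nat.cast_ne_zero.mpr hm0
    have hrR : (r : ℝ) ≠ 0 := Nat.cast_ne_zero.mpr (by omega : r ≠ 0)
    have hrf0 : (r.factorial : ℝ) ≠ 0 := Nat.cast_ne_zero.mpr r.factorial_ne_zero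
    have hpow : (m : ℝ) ^ r = (m : ℝ) ^ (r - 1) * m := by
      rw [← pow_succ]
      congr 1
      omega
    unfold A
    have hj0 : j ≠ 0 := by omega
    simp only [hj0, if_false, hjm, if_true, ← hr]
    rw [hcast, hpow]
    field_simp

lemma enat_summable {ι : Type*} (f : ι → ℕ∞) : Summable f :=
  ⟨⨆ s : Finset ι, ∑ i ∈ s, f i,
    tendsto_atTop_iSup (fun s t h => Finset.sum_le_sum_of_subset h)⟩

lemma zero_of_all_pos {f : ℕ → ℕ} {r N : ℕ} (hrN : r ≤ N)
    (htot : (∑' n, (f n : ℕ∞)) = (r : ℕ∞)) : ∃ n ≤ N, f n = 0 := by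
  by_contra h
  push_neg at h
  have h1 : ∀ n ∈ Finset.range (N + 1), (1 : ℕ∞) ≤ (f n : ℕ∞) := by
    intro n hn
    have hn' : n ≤ N := by
      have := Finset.mem_range.mp hn
      omega
    exact_mod_cast Nat.one_le_iff_ne_zero.mpr (h n hn')
  have h2 : ((N : ℕ∞) + 1) ≤ ∑ n ∈ Finset.range (N + 1), (f n : ℕ∞) := by
    calc ((N : ℕ∞) + 1) = ∑ _n ∈ Finset.range (N + 1), (1 : ℕ∞) := by
          simp
        _ ≤ _ := Finset.sum_le_sum h1
  have h3 : ∑ n ∈ Finset.range (N + 1), (f n : ℕ∞) ≤ ∑' n, (f n : ℕ∞) :=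
    Summable.sum_le_tsum _ (fun _ _ => zero_le) (enat_summable _)
  rw [htot] at h3
  have h4 : ((N : ℕ∞) + 1) ≤ (r : ℕ∞) := le_trans h2 h3
  have h5 : ((N + 1 : ℕ) : ℕ∞) ≤ (r : ℕ∞) := by push_cast; exact h4
  have := Nat.cast_le (α := ℕ∞) |>.mp h5
  omega

lemma total_eq_iff {f : ℕ → ℕ} (habs : ∀ n, f n = 0 → f (n + 1) = 0) {r N : ℕ} (hrN : r ≤ N) :
    (∑' n, (f n : ℕ∞)) = (r : ℕ∞) ↔ (f N = 0 ∧ ∑ n ∈ Finset.range N, f n = r) := by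
  have habs' : ∀ n m, n ≤ m → f n = 0 → f m = 0 := by
    intro n m hnm h0
    induction m with
    | zero =>
      have hn0 : n = 0 := by omega
      rwa [hn0] at h0
    | succ p ih =>
      rcases Nat.lt_or_ge n (p + 1) with h | h
      · exact habs p (ih (by omega))
      · have : n = p + 1 := by omega
        rwa [← this]
  constructor
  · intro htot
    obtain ⟨n, hn, hn0⟩ := zero_of_all_pos hrN htot
    have hfN : f N = 0 := habs' n N hn hn0
    refine ⟨hfN, ?_⟩
    have hz : ∀ i ∉ Finset.range N, (f i : ℕ∞) = 0 := by
      intro i hi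
      have : N ≤ i := by simpa [Finset.mem_range, not_lt] using hi
      simp [habs' N i this hfN]
    rw [tsum_eq_sum hz] at htot
    have : ((∑ n ∈ Finset.range N, f n : ℕ) : ℕ∞) = (r : ℕ∞) := by
      rw [Nat.cast_sum]; exact htot
    exact_mod_cast this
  · rintro ⟨hfN, hsum⟩
    have hz : ∀ i ∉ Finset.range N, (f i : ℕ∞) = 0 := by
      intro i hi
      have : N ≤ i := by simpa [Finset.mem_range, not_lt] using hi
      simp [habs' N i this hfN]
    rw [tsum_eq_sum hz, ← Nat.cast_sum, hsum]

/-- Generation sizes of a GW process started with `j` individuals. -/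
def gen {Ω : Type*} (ξ : ℕ → ℕ → Ω → ℕ) (j : ℕ) : ℕ → Ω → ℕ
  | 0, _ => j
  | n + 1, ω => ∑ i ∈ Finset.range (gen ξ j n ω), ξ n i ω

lemma gwGen_eq_gen {Ω : Type*} (ξ : ℕ → ℕ → Ω → ℕ) : gwGen ξ = gen ξ 1 := by
  funext n
  induction n with
  | zero => rfl
  | succ p ih => funext ω; simp only [gwGen, gen, ih]

lemma gen_absorb {Ω : Type*} (ξ : ℕ → ℕ → Ω → ℕ) (j : ℕ) (ω : Ω) (n : ℕ)
    (h : gen ξ j n ω = 0) : gen ξ j (n + 1) ω = 0 := by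
  simp [gen, h]

lemma gen_zero {Ω : Type*} (ξ : ℕ → ℕ → Ω → ℕ) (n : ℕ) (ω : Ω) : gen ξ 0 n ω = 0 := by
  induction n with
  | zero => rfl
  | succ p ih => simp [gen, ih]

lemma gen_shift {Ω : Type*} (ξ : ℕ → ℕ → Ω → ℕ) (j i : ℕ) (ω : Ω)
    (h : gen ξ j 1 ω = i) (n : ℕ) :
    gen ξ j (n + 1) ω = gen (fun n s => ξ (n + 1) s) i n ω := by
  induction n with
  | zero => exact h
  | succ p ih =>
    have h1 : gen ξ j (p + 1 + 1) ω = ∑ s ∈ Finset.range (gen ξ j (p + 1) ω), ξ (p + 1) s ω := rfl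
    rw [h1, ih]
    rfl

lemma measurable_gen {Ω : Type*} {mΩ : MeasurableSpace Ω} {ξ : ℕ → ℕ → Ω → ℕ}
    (hmeas : ∀ n i, Measurable (ξ n i)) (j n : ℕ) : Measurable (gen ξ j n) := by
  induction n with
  | zero => exact measurable_const
  | succ p ih =>
    have : ∀ c : ℕ, MeasurableSet ((gen ξ j (p + 1)) ⁻¹' {c}) := by
      intro c
      have : (gen ξ j (p + 1)) ⁻¹' {c}
          = ⋃ d : ℕ, ({ω | gen ξ j p ω = d} ∩ {ω | ∑ i ∈ Finset.range d, ξ p i ω = c}) := by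
        ext ω
        simp only [Set.mem_preimage, Set.mem_singleton_iff, Set.mem_iUnion, Set.mem_inter_iff,
          Set.mem_setOf_eq, gen]
        constructor
        · intro h; exact ⟨gen ξ j p ω, rfl, h⟩
        · rintro ⟨d, hd, hc⟩; rw [hd]; exact hc
      rw [this]
      refine MeasurableSet.iUnion fun d => MeasurableSet.inter ?_ ?_
      · exact ih (measurableSet_singleton d)
      · exact (Finset.measurable_sum _ (fun i _ => hmeas p i)) (measurableSet_singleton c)
    exact measurable_to_countable' this

lemma iIndep_reindex {Ω ι ι' : Type*} [Nonempty ι'] {mΩ : MeasurableSpace Ω} {μ : Measure Ω}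
    (g : ι' → ι) (hg : Function.Injective g) {m : ι → MeasurableSpace Ω}
    (h : iIndep m μ) : iIndep (fun i' => m (g i')) μ := by
  rw [iIndep_iff] at h ⊢
  intro s f hf
  set f' : ι → Set Ω := fun i => f (Function.invFun g i) with hf'
  have hinv : ∀ i' : ι', f' (g i') = f i' := fun i' => by
    simp only [hf', Function.leftInverse_invFun hg i']
  have hmap := h (s.map ⟨g, hg⟩) (f := f') (fun i hi => by
    rcases Finset.mem_map.mp hi with ⟨i', hi', rfl⟩
    show MeasurableSet[m (g i')] (f' (g i'))
    rw [hinv]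
    exact hf i' hi')
  have h1 : ⋂ i ∈ s.map ⟨g, hg⟩, f' i = ⋂ i' ∈ s, f i' := by
    ext x
    simp only [Set.mem_iInter, Finset.mem_map, Function.Embedding.coeFn_mk]
    constructor
    · intro hx i' hi'
      rw [← hinv i']
      exact hx (g i') ⟨i', hi', rfl⟩
    · rintro hx i ⟨i', hi', rfl⟩
      rw [hinv i']
      exact hx i' hi'
  have h2 : ∏ i ∈ s.map ⟨g, hg⟩, μ (f' i) = ∏ i' ∈ s, μ (f i') := by
    rw [Finset.prod_map]
    exact Finset.prod_congr rfl fun i' _ => by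
      show μ (f' (g i')) = μ (f i')
      rw [hinv]
  rwa [h1, h2] at hmap

lemma isGW_iIndepFun_comp {Ω ι : Type*} [Nonempty ι] [MeasurableSpace Ω] {P : Measure Ω}
    {ξ : ℕ → ℕ → Ω → ℕ} {μ : ℕ → ℝ≥0∞} (hξ : IsGW P ξ μ)
    (g : ι → ℕ × ℕ) (hg : Function.Injective g) :
    iIndepFun (m := fun _ : ι => (inferInstance : MeasurableSpace ℕ))
      (fun i => ξ (g i).1 (g i).2) P := by
  have h := hξ.2.2.iIndep
  rw [iIndepFun_iff_iIndep]
  exact iIndep_reindex g hg h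

lemma poissonPMF'_eq_pois (lam : ℝ) (m : ℕ) :
    poissonPMF' lam m = ENNReal.ofReal (pois lam m) := rfl

lemma rowsum_dist {Ω : Type*} [MeasurableSpace Ω] {P : Measure Ω} [IsProbabilityMeasure P]
    {lam : ℝ} (hlam : 0 ≤ lam) {ξ : ℕ → ℕ → Ω → ℕ} (hξ : IsGW P ξ (poissonPMF' lam)) (n : ℕ) :
    ∀ c r : ℕ, P {ω | ∑ s ∈ Finset.range c, ξ n s ω = r}
      = ENNReal.ofReal (pois ((c : ℝ) * lam) r) := by
  intro c
  induction c with
  | zero =>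
    intro r
    rcases Nat.eq_zero_or_pos r with rfl | hr
    · simp [pois]
    · have h1 : {ω : Ω | ∑ s ∈ Finset.range 0, ξ n s ω = r} = ∅ := by
        ext ω; simp; omega
      rw [h1]
      simp only [Nat.cast_zero, zero_mul, pois_zero]
      rw [if_neg (by omega)]
      simp
  | succ c ih =>
    intro r
    have hrow : iIndepFun (m := fun _ : ℕ => (inferInstance : MeasurableSpace ℕ))
        (fun s => ξ n s) P :=
      isGW_iIndepFun_comp hξ (fun s => (n, s)) (fun a b hab => by
        simpa using congrArg Prod.snd hab)
    have hInd : IndepFun (∑ s ∈ Finset.range c, ξ n s) (ξ n c) P :=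
      hrow.indepFun_finsetSum_of_notMem (fun s => hξ.1 n s) (by simp)
    have hXmeas : Measurable (fun ω => ∑ s ∈ Finset.range c, ξ n s ω) :=
      Finset.measurable_sum _ (fun s _ => hξ.1 n s)
    have hdecomp : {ω : Ω | ∑ s ∈ Finset.range (c + 1), ξ n s ω = r}
        = ⋃ a ∈ Finset.range (r + 1),
            ((fun ω => ∑ s ∈ Finset.range c, ξ n s ω) ⁻¹' {a} ∩ (ξ n c) ⁻¹' {r - a}) := by
      ext ω
      simp only [Set.mem_setOf_eq, Set.mem_iUnion, Set.mem_inter_iff, Set.mem_preimage,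
        Set.mem_singleton_iff, Finset.mem_range, Finset.sum_range_succ]
      constructor
      · intro h
        exact ⟨∑ s ∈ Finset.range c, ξ n s ω, by omega, rfl, by omega⟩
      · rintro ⟨a, ha, h1, h2⟩
        omega
    rw [hdecomp, measure_biUnion_finset ?disj ?meas]
    case disj =>
      intro a ha b hb hab
      refine Set.disjoint_left.mpr ?_
      rintro ω ⟨h1, _⟩ ⟨h2, _⟩
      exact hab (h1.symm.trans h2)
    case meas =>
      intro a _
      exact (hXmeas (measurableSet_singleton a)).inter
        ((hξ.1 n c) (measurableSet_singleton (r - a)))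
    have hterm : ∀ a ∈ Finset.range (r + 1),
        P ((fun ω => ∑ s ∈ Finset.range c, ξ n s ω) ⁻¹' {a} ∩ (ξ n c) ⁻¹' {r - a})
          = ENNReal.ofReal (pois ((c : ℝ) * lam) a * pois lam (r - a)) := by
      intro a _
      have hfun : (∑ s ∈ Finset.range c, ξ n s) = fun ω => ∑ s ∈ Finset.range c, ξ n s ω := by
        funext ω
        simp [Finset.sum_apply]
      rw [← hfun]
      rw [hInd.measure_inter_preimage_eq_mul _ _ (measurableSet_singleton a)
        (measurableSet_singleton (r - a))]
      have h1 : P ((∑ s ∈ Finset.range c, ξ n s) ⁻¹' {a})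
          = ENNReal.ofReal (pois ((c : ℝ) * lam) a) := by
        rw [hfun]
        have : (fun ω => ∑ s ∈ Finset.range c, ξ n s ω) ⁻¹' {a}
            = {ω : Ω | ∑ s ∈ Finset.range c, ξ n s ω = a} := rfl
        rw [this, ih a]
      have h2 : P ((ξ n c) ⁻¹' {r - a}) = ENNReal.ofReal (pois lam (r - a)) := by
        have : (ξ n c) ⁻¹' {r - a} = {ω : Ω | ξ n c ω = r - a} := rfl
        rw [this, hξ.2.1 n c (r - a), poissonPMF'_eq_pois]
      rw [h1, h2, ← ENNReal.ofReal_mul (pois_nonneg (by positivity) a)]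
    rw [Finset.sum_congr rfl hterm]
    rw [← ENNReal.ofReal_sum_of_nonneg (fun a _ =>
      mul_nonneg (pois_nonneg (by positivity) a) (pois_nonneg hlam (r - a)))]
    rw [pois_conv]
    congr 1
    push_cast
    ring

lemma isGW_shift {Ω : Type*} [MeasurableSpace Ω] {P : Measure Ω} {ξ : ℕ → ℕ → Ω → ℕ}
    {μ : ℕ → ℝ≥0∞} (hξ : IsGW P ξ μ) : IsGW P (fun n s => ξ (n + 1) s) μ := by
  refine ⟨fun n i => hξ.1 _ _, fun n i m => hξ.2.1 _ _ _, ?_⟩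
  exact isGW_iIndepFun_comp hξ (fun q : ℕ × ℕ => (q.1 + 1, q.2))
    (fun a b hab => by
      have h1 := congrArg Prod.fst hab
      have h2 := congrArg Prod.snd hab
      simp only at h1 h2
      exact Prod.ext (by omega) h2)

section TwoBlock

variable {Ω : Type*} [mΩ : MeasurableSpace Ω] {P : Measure Ω} {ξ : ℕ → ℕ → Ω → ℕ}
  {μ : ℕ → ℝ≥0∞}

/-- The σ-algebra generated by row `0` of the offspring variables. -/
def M0 (ξ : ℕ → ℕ → Ω → ℕ) : MeasurableSpace Ω :=
  ⨆ q ∈ {q : ℕ × ℕ | q.1 = 0}, MeasurableSpace.comap (ξ q.1 q.2) inferInstance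

/-- The σ-algebra generated by rows `≥ 1` of the offspring variables. -/
def M1 (ξ : ℕ → ℕ → Ω → ℕ) : MeasurableSpace Ω :=
  ⨆ q ∈ {q : ℕ × ℕ | q.1 = 0}ᶜ, MeasurableSpace.comap (ξ q.1 q.2) inferInstance

lemma indep_M0_M1 (hξ : IsGW P ξ μ) {SA SB : Set Ω}
    (hA : MeasurableSet[M0 ξ] SA) (hB : MeasurableSet[M1 ξ] SB) :
    P (SA ∩ SB) = P SA * P SB := by
  have h_le : ∀ q : ℕ × ℕ,
      MeasurableSpace.comap (ξ q.1 q.2) (inferInstance : MeasurableSpace ℕ) ≤ mΩ :=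
    fun q => measurable_iff_comap_le.mp (hξ.1 q.1 q.2)
  have hInd := indep_biSup_compl h_le hξ.2.2.iIndep {q : ℕ × ℕ | q.1 = 0}
  exact (Indep_iff _ _ _).mp hInd SA SB hA hB

lemma measurable_M0_row (s : ℕ) :
    Measurable[M0 ξ] (ξ 0 s) := by
  refine measurable_iff_comap_le.mpr ?_
  exact le_trans (le_of_eq rfl)
    (le_biSup (fun q : ℕ × ℕ => MeasurableSpace.comap (ξ q.1 q.2) inferInstance)
      (show ((0 : ℕ), s) ∈ {q : ℕ × ℕ | q.1 = 0} from rfl))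

lemma measurable_M1_row (n s : ℕ) :
    Measurable[M1 ξ] (ξ (n + 1) s) := by
  refine measurable_iff_comap_le.mpr ?_
  exact le_trans (le_of_eq rfl)
    (le_biSup (fun q : ℕ × ℕ => MeasurableSpace.comap (ξ q.1 q.2) inferInstance)
      (show ((n + 1 : ℕ), s) ∈ {q : ℕ × ℕ | q.1 = 0}ᶜ by simp))

end TwoBlock

/-- Master lemma: distribution of the total progeny of a Poisson GW process
started from `j` individuals. -/
lemma master {Ω : Type*} [MeasurableSpace Ω] (P : Measure Ω) [IsProbabilityMeasure P]
    {lam : ℝ} (hlam : 0 ≤ lam) :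
    ∀ (m : ℕ) (ξ : ℕ → ℕ → Ω → ℕ), IsGW P ξ (poissonPMF' lam) → ∀ j : ℕ,
      P {ω | (∑' n, (gen ξ j n ω : ℕ∞)) = (m : ℕ∞)}
        = ENNReal.ofReal (A lam j m) := by
  intro m
  induction m using Nat.strong_induction_on with
  | _ m IH =>
  intro ξ hξ j
  rcases Nat.eq_zero_or_pos j with rfl | hj
  · -- j = 0 : total progeny is 0 a.s.
    have htot : ∀ ω : Ω, (∑' n, (gen ξ 0 n ω : ℕ∞)) = 0 := by
      intro ω
      simp [gen_zero]
    rcases Nat.eq_zero_or_pos m with rfl | hm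
    · have hset : {ω : Ω | (∑' n, (gen ξ 0 n ω : ℕ∞)) = ((0 : ℕ) : ℕ∞)} = Set.univ := by
        ext ω; simp [htot ω]
      rw [hset]
      simp [A]
    · have hset : {ω : Ω | (∑' n, (gen ξ 0 n ω : ℕ∞)) = (m : ℕ∞)} = ∅ := by
        ext ω
        simp only [Set.mem_setOf_eq, Set.mem_empty_iff_false, iff_false, htot ω]
        intro h
        have : (0 : ℕ∞) = ((m : ℕ) : ℕ∞) := h
        have : (0 : ℕ) = m := by exact_mod_cast this
        omega
      rw [hset]
      have : A lam 0 m = 0 := by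
        unfold A
        rw [if_pos rfl, if_neg (by omega)]
      simp [this]
  rcases Nat.lt_or_ge m j with hmj | hjm
  · -- m < j : impossible
    have hempty : {ω : Ω | (∑' n, (gen ξ j n ω : ℕ∞)) = (m : ℕ∞)} = ∅ := by
      ext ω
      simp only [Set.mem_setOf_eq, Set.mem_empty_iff_false, iff_false]
      rw [total_eq_iff (gen_absorb ξ j ω) (le_refl m)]
      rintro ⟨h0, hsum⟩
      rcases Nat.eq_zero_or_pos m with rfl | hm
      · have : gen ξ j 0 ω = j := rfl
        omega
      · have hle : gen ξ j 0 ω ≤ ∑ n ∈ Finset.range m, gen ξ j n ω :=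
          Finset.single_le_sum (f := fun n => gen ξ j n ω) (fun _ _ => Nat.zero_le _)
            (Finset.mem_range.mpr hm)
        have : gen ξ j 0 ω = j := rfl
        omega
    rw [hempty, A_eq_zero_of_lt hmj]
    simp
  · -- main case : 1 ≤ j ≤ m
    have hm1 : 1 ≤ m := le_trans hj hjm
    set ξ' : ℕ → ℕ → Ω → ℕ := fun n s => ξ (n + 1) s with hξ'def
    have hξ' : IsGW P ξ' (poissonPMF' lam) := isGW_shift hξ
    set r := m - j with hrdef
    have hrm : r < m := by omega
    have hgen1 : ∀ ω : Ω, gen ξ j 1 ω = ∑ s ∈ Finset.range j, ξ 0 s ω := fun ω => rfl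
    -- decomposition of the event according to the first generation
    have hdecomp : {ω : Ω | (∑' n, (gen ξ j n ω : ℕ∞)) = (m : ℕ∞)}
        = ⋃ i : ℕ, ({ω : Ω | ∑ s ∈ Finset.range j, ξ 0 s ω = i}
            ∩ {ω : Ω | (∑' n, (gen ξ' i n ω : ℕ∞)) = ((r : ℕ) : ℕ∞)}) := by
      ext ω
      simp only [Set.mem_setOf_eq, Set.mem_iUnion, Set.mem_inter_iff]
      rw [total_eq_iff (gen_absorb ξ j ω) (le_refl m)]
      have hg0 : gen ξ j 0 ω = j := rfl
      constructor
      · rintro ⟨h0, hsum⟩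
        refine ⟨gen ξ j 1 ω, (hgen1 ω).symm, ?_⟩
        rw [total_eq_iff (gen_absorb ξ' _ ω) (show r ≤ m - 1 by omega)]
        have hsh : ∀ n, gen ξ j (n + 1) ω = gen ξ' (gen ξ j 1 ω) n ω :=
          gen_shift ξ j _ ω rfl
        have e0 : ∑ n ∈ Finset.range m, gen ξ j n ω
            = ∑ n ∈ Finset.range (m - 1 + 1), gen ξ j n ω := by
          rw [show m - 1 + 1 = m by omega]
        have e1 : ∑ n ∈ Finset.range (m - 1 + 1), gen ξ j n ω
            = ∑ n ∈ Finset.range (m - 1), gen ξ j (n + 1) ω + gen ξ j 0 ω :=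
          Finset.sum_range_succ' _ _
        have e2 : ∑ n ∈ Finset.range (m - 1), gen ξ j (n + 1) ω
            = ∑ n ∈ Finset.range (m - 1), gen ξ' (gen ξ j 1 ω) n ω :=
          Finset.sum_congr rfl fun n _ => hsh n
        constructor
        · rw [← hsh (m - 1), show m - 1 + 1 = m by omega]
          exact h0
        · rw [e0, e1, e2] at hsum
          omega
      · rintro ⟨i, hi, htot'⟩
        rw [total_eq_iff (gen_absorb ξ' i ω) (show r ≤ m - 1 by omega)] at htot'
        obtain ⟨h0', hsum'⟩ := htot'
        have hsh : ∀ n, gen ξ j (n + 1) ω = gen ξ' i n ω :=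
          gen_shift ξ j i ω ((hgen1 ω).trans hi)
        have e0 : ∑ n ∈ Finset.range m, gen ξ j n ω
            = ∑ n ∈ Finset.range (m - 1 + 1), gen ξ j n ω := by
          rw [show m - 1 + 1 = m by omega]
        have e1 : ∑ n ∈ Finset.range (m - 1 + 1), gen ξ j n ω
            = ∑ n ∈ Finset.range (m - 1), gen ξ j (n + 1) ω + gen ξ j 0 ω :=
          Finset.sum_range_succ' _ _
        have e2 : ∑ n ∈ Finset.range (m - 1), gen ξ j (n + 1) ω
            = ∑ n ∈ Finset.range (m - 1), gen ξ' i n ω :=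
          Finset.sum_congr rfl fun n _ => hsh n
        constructor
        · rw [show m = m - 1 + 1 by omega, hsh (m - 1)]
          exact h0'
        · rw [e0, e1, e2, hsum', hg0]
          omega
    -- now compute the measure
    have hmeas' : ∀ n s, Measurable (ξ' n s) := fun n s => hξ.1 _ _
    have hBchar : ∀ i : ℕ, {ω : Ω | (∑' n, (gen ξ' i n ω : ℕ∞)) = ((r : ℕ) : ℕ∞)}
        = (gen ξ' i r) ⁻¹' {0}
          ∩ (fun ω => ∑ n ∈ Finset.range r, gen ξ' i n ω) ⁻¹' {r} := by
      intro i
      ext ω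
      simp only [Set.mem_setOf_eq, Set.mem_inter_iff, Set.mem_preimage, Set.mem_singleton_iff]
      exact total_eq_iff (gen_absorb ξ' i ω) (le_refl r)
    have hAmeas : ∀ i : ℕ, MeasurableSet {ω : Ω | ∑ s ∈ Finset.range j, ξ 0 s ω = i} := fun i =>
      (Finset.measurable_sum _ fun s _ => hξ.1 0 s) (measurableSet_singleton i)
    have hBmeas : ∀ i : ℕ,
        MeasurableSet {ω : Ω | (∑' n, (gen ξ' i n ω : ℕ∞)) = ((r : ℕ) : ℕ∞)} := by
      intro i
      rw [hBchar i]
      exact ((measurable_gen hmeas' i r) (measurableSet_singleton 0)).inter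
        ((Finset.measurable_sum _ fun n _ => measurable_gen hmeas' i n)
          (measurableSet_singleton r))
    rw [hdecomp, measure_iUnion ?disj ?meas]
    case disj =>
      intro a b hab
      refine Set.disjoint_left.mpr ?_
      rintro ω ⟨h1, _⟩ ⟨h2, _⟩
      exact hab (h1.symm.trans h2)
    case meas => exact fun i => (hAmeas i).inter (hBmeas i)
    have hPi : ∀ i : ℕ,
        P ({ω : Ω | ∑ s ∈ Finset.range j, ξ 0 s ω = i}
            ∩ {ω : Ω | (∑' n, (gen ξ' i n ω : ℕ∞)) = ((r : ℕ) : ℕ∞)})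
          = ENNReal.ofReal (pois ((j : ℝ) * lam) i) * ENNReal.ofReal (A lam i r) := by
      intro i
      have hA : MeasurableSet[M0 ξ] {ω : Ω | ∑ s ∈ Finset.range j, ξ 0 s ω = i} := by
        have hsum : Measurable[M0 ξ] (fun ω => ∑ s ∈ Finset.range j, ξ 0 s ω) :=
          Finset.measurable_sum _ (fun s _ => measurable_M0_row s)
        exact hsum (measurableSet_singleton i)
      have hB : MeasurableSet[M1 ξ]
          {ω : Ω | (∑' n, (gen ξ' i n ω : ℕ∞)) = ((r : ℕ) : ℕ∞)} := by
        rw [hBchar i]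
        have hg : ∀ n, Measurable[M1 ξ] (gen ξ' i n) :=
          fun n => measurable_gen (mΩ := M1 ξ) (fun n s => measurable_M1_row n s) i n
        exact ((hg r) (measurableSet_singleton 0)).inter
          ((Finset.measurable_sum _ fun n _ => hg n) (measurableSet_singleton r))
      rw [indep_M0_M1 hξ hA hB]
      congr 1
      · exact rowsum_dist hlam hξ 0 j i
      · exact IH r hrm ξ' hξ' i
    rw [tsum_congr hPi]
    have hvanish : ∀ i ∉ Finset.range (r + 1),
        ENNReal.ofReal (pois ((j : ℝ) * lam) i) * ENNReal.ofReal (A lam i r) = 0 := by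
      intro i hi
      have : r < i := by
        have := Finset.mem_range.not.mp hi
        omega
      rw [A_eq_zero_of_lt this]
      simp
    rw [tsum_eq_sum hvanish]
    have hterm : ∀ i ∈ Finset.range (r + 1),
        ENNReal.ofReal (pois ((j : ℝ) * lam) i) * ENNReal.ofReal (A lam i r)
          = ENNReal.ofReal (pois ((j : ℝ) * lam) i * A lam i r) := fun i _ =>
      (ENNReal.ofReal_mul (pois_nonneg (by positivity) i)).symm
    rw [Finset.sum_congr rfl hterm,
      ← ENNReal.ofReal_sum_of_nonneg (fun i _ =>
        mul_nonneg (pois_nonneg (by positivity) i) (A_nonneg hlam i r))]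
    congr 1
    rw [A_rec lam hj hjm]

lemma sqrt_pi_le_stirlingSeq {k : ℕ} (hk : 1 ≤ k) :
    Real.sqrt Real.pi ≤ Stirling.stirlingSeq k := by
  obtain ⟨p, rfl⟩ : ∃ p, k = p + 1 := ⟨k - 1, by omega⟩
  have htend : Filter.Tendsto (Stirling.stirlingSeq ∘ Nat.succ) Filter.atTop
      (nhds (Real.sqrt Real.pi)) :=
    Stirling.tendsto_stirlingSeq_sqrt_pi.comp (Filter.tendsto_add_atTop_nat 1)
  exact Stirling.stirlingSeq'_antitone.le_of_tendsto htend p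

lemma stirling_lower {k : ℕ} (hk : 1 ≤ k) :
    Real.sqrt (2 * Real.pi * k) * ((k : ℝ) / Real.exp 1) ^ k ≤ (k.factorial : ℝ) := by
  set K : ℝ := (k : ℝ) with hK
  have hK0 : (0 : ℝ) < K := by
    have : (1 : ℝ) ≤ K := by rw [hK]; exact_mod_cast hk
    linarith
  have hden2 : (0 : ℝ) < Real.sqrt (2 * K) * (K / Real.exp 1) ^ k := by positivity
  have hsp := sqrt_pi_le_stirlingSeq hk
  have hdef : Stirling.stirlingSeq k
      = (k.factorial : ℝ) / (Real.sqrt (2 * K) * (K / Real.exp 1) ^ k) := rfl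
  rw [hdef, le_div_iff₀ hden2] at hsp
  have hsqrt : Real.sqrt (2 * Real.pi * K) = Real.sqrt Real.pi * Real.sqrt (2 * K) := by
    rw [show 2 * Real.pi * K = Real.pi * (2 * K) by ring,
      Real.sqrt_mul Real.pi_pos.le]
  rw [hsqrt]
  calc Real.sqrt Real.pi * Real.sqrt (2 * K) * (K / Real.exp 1) ^ k
      = Real.sqrt Real.pi * (Real.sqrt (2 * K) * (K / Real.exp 1) ^ k) := by ring
    _ ≤ (k.factorial : ℝ) := hsp

lemma gw_bound {lam : ℝ} (hlam : 0 ≤ lam) {k : ℕ} (hk : 1 ≤ k) :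
    Real.exp (-(lam * k)) * (lam * k) ^ (k - 1) / k.factorial
      ≤ Real.exp 1 / (Real.sqrt (2 * Real.pi) * (k : ℝ) ^ ((3 : ℝ) / 2)) := by
  set K : ℝ := (k : ℝ) with hK
  have hK1 : (1 : ℝ) ≤ K := by rw [hK]; exact_mod_cast hk
  have hK0 : (0 : ℝ) < K := by linarith
  have hfac_pos : (0 : ℝ) < (k.factorial : ℝ) := by exact_mod_cast k.factorial_pos
  have hden_pos : (0 : ℝ) < Real.sqrt (2 * Real.pi) * K ^ ((3 : ℝ) / 2) := by positivity
  rw [div_le_div_iff₀ hfac_pos hden_pos]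
  have hst := stirling_lower hk
  have hcore : (lam * Real.exp (1 - lam)) ^ (k - 1) * Real.exp (1 - lam) ≤ Real.exp 1 := by
    have h2 : lam ≤ Real.exp (lam - 1) := by
      have := Real.add_one_le_exp (lam - 1)
      linarith
    have h1 : lam * Real.exp (1 - lam) ≤ 1 := by
      calc lam * Real.exp (1 - lam) ≤ Real.exp (lam - 1) * Real.exp (1 - lam) :=
            mul_le_mul_of_nonneg_right h2 (Real.exp_nonneg _)
        _ = 1 := by rw [← Real.exp_add]; norm_num
    have h3 : (lam * Real.exp (1 - lam)) ^ (k - 1) ≤ 1 :=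
      pow_le_one₀ (by positivity) h1
    calc (lam * Real.exp (1 - lam)) ^ (k - 1) * Real.exp (1 - lam)
        ≤ 1 * Real.exp (1 - lam) := mul_le_mul_of_nonneg_right h3 (Real.exp_nonneg _)
      _ ≤ Real.exp 1 := by rw [one_mul]; exact Real.exp_le_exp.mpr (by linarith)
  have hc1 : ((k - 1 : ℕ) : ℝ) = K - 1 := by
    rw [Nat.cast_sub hk]
    simp [hK]
  have e2 : Real.exp ((K - 1) * (1 - lam)) * Real.exp (1 - lam) * Real.exp (-K)
      = Real.exp (-(lam * K)) := by
    rw [← Real.exp_add, ← Real.exp_add]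
    congr 1
    ring
  have key : Real.exp (-(lam * K)) * (lam * K) ^ (k - 1)
      = (lam * Real.exp (1 - lam)) ^ (k - 1) * Real.exp (1 - lam) * Real.exp (-K)
          * K ^ (k - 1) := by
    have e1 : Real.exp (1 - lam) ^ (k - 1) = Real.exp (((k - 1 : ℕ) : ℝ) * (1 - lam)) := by
      rw [← Real.exp_nat_mul]
    rw [mul_pow, mul_pow, e1, hc1, ← e2]
    ring
  have hKpow : K ^ ((3 : ℝ) / 2) = K * Real.sqrt K := by
    rw [show (3 : ℝ) / 2 = 1 + 1 / 2 by norm_num, Real.rpow_add hK0, Real.rpow_one,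
      ← Real.sqrt_eq_rpow]
  have hpowsucc : K ^ (k - 1) * K = K ^ k := by
    rw [← pow_succ]
    congr 1
    omega
  have hsqrtK : Real.sqrt (2 * Real.pi * K) = Real.sqrt (2 * Real.pi) * Real.sqrt K :=
    Real.sqrt_mul (by positivity) K
  have hdivpow : (K / Real.exp 1) ^ k = K ^ k * Real.exp (-K) := by
    rw [div_pow, Real.exp_one_pow, Real.exp_neg, div_eq_mul_inv]
  calc Real.exp (-(lam * K)) * (lam * K) ^ (k - 1) * (Real.sqrt (2 * Real.pi) * K ^ ((3 : ℝ) / 2))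
      = ((lam * Real.exp (1 - lam)) ^ (k - 1) * Real.exp (1 - lam))
        * (Real.sqrt (2 * Real.pi) * Real.sqrt K * (K ^ (k - 1) * K) * Real.exp (-K)) := by
        rw [key, hKpow]
        ring
    _ ≤ Real.exp 1
        * (Real.sqrt (2 * Real.pi) * Real.sqrt K * (K ^ (k - 1) * K) * Real.exp (-K)) :=
        mul_le_mul_of_nonneg_right hcore (by positivity)
    _ = Real.exp 1 * (Real.sqrt (2 * Real.pi * K) * (K / Real.exp 1) ^ k) := by
        rw [hsqrtK, hdivpow, ← hpowsucc]
        ring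
    _ ≤ Real.exp 1 * (k.factorial : ℝ) :=
        mul_le_mul_of_nonneg_left hst (Real.exp_nonneg 1)

end GWAux

/-- Otter–Dwass formula and bound: for a Galton–Watson process with `Poisson(λ)`
offspring (`λ ≥ 0`) and every `k ≥ 1`,
`P(T = k) = e^{−λk}(λk)^{k−1}/k! ≤ e/(√(2π) k^{3/2})`. -/
theorem gw_poisson_total_progeny_eq_and_bound
    {Ω : Type*} [MeasurableSpace Ω] (P : Measure Ω) [IsProbabilityMeasure P]
    (lam : ℝ) (hlam : 0 ≤ lam)
    (ξ : ℕ → ℕ → Ω → ℕ) (hξ : IsGW P ξ (poissonPMF' lam))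
    (k : ℕ) (hk : 1 ≤ k) :
    (P {ω | gwTotal ξ ω = (k : ℕ∞)}).toReal
        = Real.exp (-(lam * k)) * (lam * k) ^ (k - 1) / k.factorial ∧
      Real.exp (-(lam * k)) * (lam * k) ^ (k - 1) / k.factorial
        ≤ Real.exp 1 / (Real.sqrt (2 * Real.pi) * (k : ℝ) ^ ((3 : ℝ) / 2)) := by
  refine ⟨?_, GWAux.gw_bound hlam hk⟩
  have hml := GWAux.master P hlam k ξ hξ 1
  have hset : {ω | gwTotal ξ ω = (k : ℕ∞)}
      = {ω : Ω | (∑' n, (GWAux.gen ξ 1 n ω : ℕ∞)) = (k : ℕ∞)} := by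
    unfold gwTotal
    rw [GWAux.gwGen_eq_gen]
  rw [hset, hml, ENNReal.toReal_ofReal (GWAux.A_nonneg hlam 1 k)]
  unfold GWAux.A
  rw [if_neg (by omega : ¬ (1 : ℕ) = 0), if_pos hk]
  have hfac : ((k : ℝ)) * ((k - 1).factorial : ℝ) = (k.factorial : ℝ) := by
    exact_mod_cast Nat.mul_factorial_pred (by omega)
  rw [mul_pow, ← hfac]
  push_cast
  ring
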